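/- For a monomial with exponent vector a : Fin s → ℕ and integers 1 ≤ c < s, the symbolic degree Sdeg_c(a) := Σ_{k≥1} max(0, c − s + #{i : a(i) ≥ k}) equals the minimum over all subsets J ⊆ Fin s of cardinality c of Σ_{i∈J} a(i). -/
import Mathlib

lemma layer_cake {s : ℕ} (N : ℕ) (a : Fin s → ℕ) (J : Finset (Fin s))
    (h : ∀ i ∈ J, a i ≤ N) :
    ∑ i ∈ J, a i = ∑ k ∈ Finset.range N, (J.filter (fun i => k < a i)).card := by
  simp only [Finset.card_filter]
  rw [Finset.sum_comm]
  refine Finset.sum_congr rfl fun i hi => ?_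
  rw [← Finset.card_filter]
  have : (Finset.range N).filter (fun k => k < a i) = Finset.range (a i) := by
    ext k; simp only [Finset.mem_filter, Finset.mem_range]
    have := h i hi; omega
  rw [this, Finset.card_range]

/-- The symbolic degree of a monomial with exponent vector `a`, defined as the minimum over
all `c`-element subsets `J` of `Fin s` of the sum of `a` over `J`. -/
noncomputable def Sdeg (s c : ℕ) (a : Fin s → ℕ) : ℕ :=
  sInf {m : ℕ | ∃ J : Finset (Fin s), J.card = c ∧ m = ∑ i ∈ J, a i}

theorem stmt_3 (s c : ℕ) (hc : 1 ≤ c) (hcs : c < s) (a : Fin s → ℕ) :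
    (∑ k ∈ Finset.range (Finset.univ.sup a),
        (c + (Finset.univ.filter (fun i => k < a i)).card - s)) = Sdeg s c a := by
  classical
  set N := Finset.univ.sup a with hN
  have haN : ∀ i, a i ≤ N := fun i => Finset.le_sup (Finset.mem_univ i)
  -- sorted tuple
  set σ : Equiv.Perm (Fin s) := Tuple.sort a with hσ
  have hmono : Monotone (a ∘ σ) := Tuple.monotone_sort a
  set b : Fin s → ℕ := a ∘ σ with hb
  -- the extremal set J0
  have hlt : ∀ m ∈ Finset.range c, m < s := fun m hm =>
    lt_of_lt_of_le (Finset.mem_range.mp hm) hcs.le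
  set J0 : Finset (Fin s) :=
    Finset.map σ.toEmbedding ((Finset.range c).attachFin hlt) with hJ0
  have hJ0card : J0.card = c := by
    rw [hJ0, Finset.card_map, Finset.card_attachFin, Finset.card_range]
  have hmemJ0 : ∀ i : Fin s, i ∈ J0 ↔ ((σ.symm i : Fin s) : ℕ) < c := by
    intro i
    simp only [hJ0, Finset.mem_map, Finset.mem_attachFin, Finset.mem_range,
      Equiv.toEmbedding_apply]
    constructor
    · rintro ⟨m, hm, rfl⟩; simpa using hm
    · intro h; exact ⟨σ.symm i, h, by simp⟩
  -- f k = number of i with k < a i, invariant under σ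
  have hfσ : ∀ k, (Finset.univ.filter (fun i => k < a i)).card
      = (Finset.univ.filter (fun m : Fin s => k < b m)).card := by
    intro k
    rw [← Finset.card_map (f := σ.toEmbedding)
      (s := Finset.univ.filter (fun m : Fin s => k < b m))]
    congr 1
    ext i
    simp only [Finset.mem_map, Finset.mem_filter, Finset.mem_univ, true_and,
      Equiv.toEmbedding_apply, hb, Function.comp]
    constructor
    · rintro h; exact ⟨σ.symm i, by simpa using h, by simp⟩
    · rintro ⟨m, hm, rfl⟩; exact hm
  have hfle : ∀ k, (Finset.univ.filter (fun m : Fin s => k < b m)).card ≤ s := fun k =>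
    le_trans (Finset.card_le_card (Finset.filter_subset _ _)) (by simp)
  -- characterization of k < b m via threshold
  have hthr : ∀ (k : ℕ) (m : Fin s),
      k < b m ↔ s - (Finset.univ.filter (fun m : Fin s => k < b m)).card ≤ (m : ℕ) := by
    intro k m
    set t := (Finset.univ.filter (fun m : Fin s => k < b m)).card with ht
    constructor
    · intro h
      have hsub : Finset.Ici m ⊆ Finset.univ.filter (fun m' : Fin s => k < b m') := by
        intro m' hm'
        simp only [Finset.mem_filter, Finset.mem_univ, true_and]
        exact lt_of_lt_of_le h (hmono (Finset.mem_Ici.mp hm'))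
      have := Finset.card_le_card hsub
      rw [Fin.card_Ici] at this
      have hm : (m : ℕ) < s := m.isLt
      omega
    · intro h
      by_contra hnot
      have hsub : Finset.univ.filter (fun m' : Fin s => k < b m') ⊆ Finset.Ioi m := by
        intro m' hm'
        simp only [Finset.mem_filter, Finset.mem_univ, true_and] at hm'
        rw [Finset.mem_Ioi]
        by_contra hle
        exact hnot (lt_of_lt_of_le hm' (hmono (not_lt.mp hle)))
      have := Finset.card_le_card hsub
      rw [Fin.card_Ioi] at this
      have hm : (m : ℕ) < s := m.isLt
      omega
  -- count in J0 at each level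
  have hcount : ∀ k, (J0.filter (fun i => k < a i)).card
      = c + (Finset.univ.filter (fun i => k < a i)).card - s := by
    intro k
    set t := (Finset.univ.filter (fun m : Fin s => k < b m)).card with ht
    have h1 : J0.filter (fun i => k < a i)
        = Finset.map σ.toEmbedding
          (((Finset.range c).attachFin hlt).filter (fun m => k < b m)) := by
      ext i
      simp only [Finset.mem_filter, Finset.mem_map, Finset.mem_attachFin, Finset.mem_range,
        Equiv.toEmbedding_apply, hmemJ0, hb, Function.comp]
      constructor
      · rintro ⟨h1, h2⟩
        exact ⟨σ.symm i, ⟨by simpa using h1, by simpa using h2⟩, by simp⟩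
      · rintro ⟨m, ⟨hm1, hm2⟩, rfl⟩
        exact ⟨by simpa using hm1, hm2⟩
    rw [h1, Finset.card_map, hfσ k, ← ht]
    -- card of {m : Fin s | m < c ∧ k < b m}
    have h2 : ((Finset.range c).attachFin hlt).filter (fun m => k < b m)
        = (Finset.Ico (s - t) c).attachFin (fun m hm =>
            lt_of_lt_of_le (Finset.mem_Ico.mp hm).2 hcs.le) := by
      ext m
      simp only [Finset.mem_filter, Finset.mem_attachFin, Finset.mem_range, Finset.mem_Ico,
        hthr k m, ← ht]
      tauto
    rw [h2, Finset.card_attachFin, Nat.card_Ico]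
    have := hfle k
    omega
  -- put it together
  have key : (∑ k ∈ Finset.range N,
      (c + (Finset.univ.filter (fun i => k < a i)).card - s)) = ∑ i ∈ J0, a i := by
    rw [layer_cake N a J0 (fun i _ => haN i)]
    exact Finset.sum_congr rfl fun k _ => (hcount k).symm
  rw [key, Sdeg]
  have hmem : (∑ i ∈ J0, a i) ∈ {m : ℕ | ∃ J : Finset (Fin s), J.card = c ∧ m = ∑ i ∈ J, a i} :=
    ⟨J0, hJ0card, rfl⟩
  refine le_antisymm (le_csInf ⟨_, hmem⟩ ?_) (Nat.sInf_le hmem)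
  rintro m ⟨J, hJ, rfl⟩
  rw [layer_cake N a J0 (fun i _ => haN i), layer_cake N a J (fun i _ => haN i)]
  refine Finset.sum_le_sum fun k _ => ?_
  rw [hcount k]
  have hsub : Finset.univ.filter (fun i => k < a i)
      ⊆ J.filter (fun i => k < a i) ∪ Jᶜ := by
    intro i hi
    simp only [Finset.mem_filter, Finset.mem_univ, true_and] at hi
    by_cases h : i ∈ J
    · exact Finset.mem_union_left _ (Finset.mem_filter.mpr ⟨h, hi⟩)
    · exact Finset.mem_union_right _ (Finset.mem_compl.mpr h)
  have := Finset.card_le_card hsub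
  have h2 := Finset.card_union_le (J.filter (fun i => k < a i)) Jᶜ
  rw [Finset.card_compl, hJ] at h2
  simp only [Fintype.card_fin] at h2
  omega
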